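/- For all integers n ≥ 1, and for all s ∈ ℝ and t > 0, L̂_d applied to the function (s,t) ↦ √t (d(t)−s)^n Ê(s,t) equals ((n+1)(d(t)−s)^n/√t − ε n(n−1) √t (d(t)−s)^{n−2}) Ê(s,t). -/

import Mathlib

/-- The complementary error function `erfc z = (2/√π) ∫_z^∞ e^{-u²} du`. -/
noncomputable def erfc (z : ℝ) : ℝ :=
  (2 / Real.sqrt Real.pi) * ∫ u in Set.Ioi z, Real.exp (-u ^ 2)

/-- `ψ̂₀(s,t) = erfc((d(t)-s)/(2√(εt)))`. -/
noncomputable def psi0 (ε : ℝ) (d : ℝ → ℝ) (s t : ℝ) : ℝ :=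
  erfc ((d t - s) / (2 * Real.sqrt (ε * t)))

/-- `Ê(s,t) = exp(-(s-d(t))²/(4εt))`. -/
noncomputable def Ehat (ε : ℝ) (d : ℝ → ℝ) (s t : ℝ) : ℝ :=
  Real.exp (-(s - d t) ^ 2 / (4 * ε * t))

/-- The operator `L̂_d F = -ε F_ss + â(d(t),t) F_s + F_t`. -/
noncomputable def Ld (ε : ℝ) (a : ℝ → ℝ → ℝ) (d : ℝ → ℝ) (F : ℝ → ℝ → ℝ) (s t : ℝ) : ℝ :=
  -ε * iteratedDeriv 2 (fun x => F x t) s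
    + a (d t) t * deriv (fun x => F x t) s
    + deriv (fun τ => F s τ) t

/-- for all integers `n ≥ 1`, `Ld` applied to
`(s,t) ↦ sqrt t * (d t - s)^n * Ehat s t` equals
`((n+1)(d t - s)^n / sqrt t - ε n (n-1) sqrt t (d t - s)^(n-2)) Ehat s t`. -/
theorem stmt_8
    (ε d₀ : ℝ) (hε : 0 < ε) (hd₀ : d₀ ∈ Set.Ioo (0 : ℝ) 1)
    (a : ℝ → ℝ → ℝ) (haC1 : ContDiff ℝ 1 (fun p : ℝ × ℝ => a p.1 p.2))
    (hapos : ∀ s t : ℝ, 0 ≤ t → 0 < a s t)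
    (d : ℝ → ℝ) (hdC1 : ContDiff ℝ 1 d)
    (hdODE : ∀ t : ℝ, 0 ≤ t → HasDerivAt d (a (d t) t) t)
    (hd0 : d 0 = d₀) :
    ∀ n : ℕ, 1 ≤ n → ∀ s t : ℝ, 0 < t →
      Ld ε a d (fun s' t' => Real.sqrt t' * (d t' - s') ^ n * Ehat ε d s' t') s t
        = (((n : ℝ) + 1) * (d t - s) ^ n / Real.sqrt t
            - ε * (n : ℝ) * ((n : ℝ) - 1) * Real.sqrt t * (d t - s) ^ (n - 2))
          * Ehat ε d s t := by
  intro n hn s t ht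
  obtain ⟨k, rfl⟩ : ∃ k, n = k + 1 := ⟨n - 1, (Nat.succ_pred_eq_of_pos hn).symm⟩
  have ht0 : t ≠ 0 := ne_of_gt ht
  have hε0 : ε ≠ 0 := ne_of_gt hε
  have hc : 4 * ε * t ≠ 0 := by positivity
  have hr0 : Real.sqrt t ≠ 0 := ne_of_gt (Real.sqrt_pos.mpr ht)
  set A := a (d t) t with hA
  set D := d t with hD
  -- derivative of the Gaussian in s
  have hE : ∀ x : ℝ, HasDerivAt (fun y => Real.exp (-(y - D) ^ 2 / (4 * ε * t)))
      (Real.exp (-(x - D) ^ 2 / (4 * ε * t)) * (2 * (D - x) / (4 * ε * t))) x := by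
    intro x
    have h := ((((hasDerivAt_id x).sub_const D).pow 2).neg.div_const (4 * ε * t)).exp
    simp only [id_eq, Pi.pow_def, Pi.neg_def] at h
    convert h using 1
    push_cast; ring
  -- derivative of powers of (D - ·)
  have hP : ∀ (m : ℕ) (x : ℝ), HasDerivAt (fun y => (D - y) ^ m)
      (-(m : ℝ) * (D - x) ^ (m - 1)) x := by
    intro m x
    have h := ((hasDerivAt_const x D).sub (hasDerivAt_id x)).pow m
    simp only [id_eq, Pi.pow_def, Pi.sub_def] at h
    refine h.congr_deriv ?_
    push_cast; ring
  -- first derivative in s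
  set F1 : ℝ → ℝ := fun x =>
      Real.sqrt t * (-((k : ℝ) + 1) * (D - x) ^ k) * Real.exp (-(x - D) ^ 2 / (4 * ε * t))
      + Real.sqrt t * (D - x) ^ (k + 1) *
          (Real.exp (-(x - D) ^ 2 / (4 * ε * t)) * (2 * (D - x) / (4 * ε * t))) with hF1def
  have hF1 : ∀ x : ℝ, HasDerivAt
      (fun y => Real.sqrt t * (D - y) ^ (k + 1) * Real.exp (-(y - D) ^ 2 / (4 * ε * t)))
      (F1 x) x := by
    intro x
    have h := (((hP (k + 1) x).const_mul (Real.sqrt t)).mul (hE x))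
    simp only [Pi.mul_def] at h
    refine h.congr_deriv ?_
    simp only [hF1def, Nat.add_sub_cancel]
    push_cast; ring
  -- second derivative in s (at s)
  have hq2 : HasDerivAt (fun x : ℝ => 2 * (D - x) / (4 * ε * t)) (2 * (0 - 1) / (4 * ε * t)) s := by
    have h := (((hasDerivAt_const s D).sub (hasDerivAt_id s)).const_mul 2).div_const (4 * ε * t)
    simpa [id_eq] using h
  have hF2 := ((((hP k s).const_mul (-((k : ℝ) + 1))).const_mul (Real.sqrt t)).mul (hE s)).add
      ((((hP (k + 1) s).const_mul (Real.sqrt t)).mul ((hE s).mul hq2)))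
  -- time derivative
  have hd' : HasDerivAt d A t := hdODE t ht.le
  have hsq : HasDerivAt Real.sqrt (1 / (2 * Real.sqrt t)) t := Real.hasDerivAt_sqrt ht0
  have hpow := (hd'.sub_const s).pow (k + 1)
  have hnum := (((hasDerivAt_const t s).sub hd').pow 2).neg
  have hden : HasDerivAt (fun τ : ℝ => 4 * ε * τ) (4 * ε) t := by
    simpa using (hasDerivAt_id t).const_mul (4 * ε)
  have hT := (hsq.mul hpow).mul ((hnum.div hden hc).exp)
  -- assemble
  have e2 : iteratedDeriv 2
      (fun x => Real.sqrt t * (D - x) ^ (k + 1) * Real.exp (-(x - D) ^ 2 / (4 * ε * t))) s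
      = deriv F1 s := by
    rw [iteratedDeriv_succ, iteratedDeriv_one]
    congr 1
    funext x
    exact (hF1 x).deriv
  simp only [Ld, Ehat, ← hD, ← hA]
  simp only [Pi.add_def, Pi.mul_def] at hF2
  simp only [Pi.mul_def, Pi.pow_def, Pi.sub_def, Pi.div_def, Pi.neg_def] at hT
  rw [e2, hF2.deriv, (hF1 s).deriv, hT.deriv]
  rw [← hD]
  simp only [hF1def, Nat.add_sub_cancel, pow_one]
  have h21 : k + 1 - 2 = k - 1 := rfl
  rw [h21]
  have hsd : s - D = -(D - s) := by ring
  rw [hsd]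
  simp only [neg_neg, neg_sq]
  set r := Real.sqrt t with hr
  have hrt : r ^ 2 = t := by rw [hr]; exact Real.sq_sqrt ht.le
  rw [← hrt]
  push_cast
  field_simp
  ring
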